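/- Let N be an even positive integer, M = N/2, L > 0, and ω_N = e^{−2πi/N}. Let D_N be the N×N real matrix with entries (D_N)_{l j} = Re( (π/(N L)) · Σ_{m=−M}^{M−1} ω_N^{m(j−l)} · i·m ) for 1 ≤ l, j ≤ N, and let D be the flip matrix defined by (D U)_j = U_{N+1−j} for U ∈ ℝ^N. Then D·D_N = −D_N·D; in particular D_N²·D = D·D_N². -/
import Mathlib


open Complex in
/-- The Fourier pseudospectral differentiation matrix `D_N` on the uniform grid of `N`
collocation points of `(-L, L)`, with `(D_N)_{l j} =
Re((π/(NL)) Σ_{m=-N/2}^{N/2-1} ω_N^{m(j-l)} i m)`, `ω_N = exp(-2πi/N)`. -/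
noncomputable def DNmat (N : ℕ) (L : ℝ) : Matrix (Fin N) (Fin N) ℝ :=
  fun l j =>
    (((Real.pi / (N * L) : ℝ) : ℂ) *
      ∑ m ∈ Finset.Icc (-((N : ℤ) / 2)) ((N : ℤ) / 2 - 1),
        Complex.exp (-2 * Real.pi * Complex.I / N) ^ (m * ((j : ℤ) - (l : ℤ)))
          * (Complex.I * m)).re

/-- The reflection (flip) matrix `D` on `ℝ^N`, `(D U)_j = U_{N+1-j}` (1-indexed). -/
def flipMat (N : ℕ) : Matrix (Fin N) (Fin N) ℝ :=
  fun l j => if (l : ℕ) + (j : ℕ) = N - 1 then 1 else 0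

lemma conj_omega (N : ℕ) :
    (starRingEnd ℂ) (Complex.exp (-2 * Real.pi * Complex.I / N)) =
      (Complex.exp (-2 * Real.pi * Complex.I / N))⁻¹ := by
  rw [← Complex.exp_conj, ← Complex.exp_neg]
  congr 1
  simp [map_div₀, map_ofNat]
  ring

lemma odd_sum (N : ℕ) (L : ℝ) (e : ℤ) :
    (((Real.pi / (N * L) : ℝ) : ℂ) *
      ∑ m ∈ Finset.Icc (-((N : ℤ) / 2)) ((N : ℤ) / 2 - 1),
        Complex.exp (-2 * Real.pi * Complex.I / N) ^ (m * (-e))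
          * (Complex.I * m)).re
    = -(((Real.pi / (N * L) : ℝ) : ℂ) *
      ∑ m ∈ Finset.Icc (-((N : ℤ) / 2)) ((N : ℤ) / 2 - 1),
        Complex.exp (-2 * Real.pi * Complex.I / N) ^ (m * e)
          * (Complex.I * m)).re := by
  set ω := Complex.exp (-2 * Real.pi * Complex.I / N) with hω
  have key : (((Real.pi / (N * L) : ℝ) : ℂ) *
      ∑ m ∈ Finset.Icc (-((N : ℤ) / 2)) ((N : ℤ) / 2 - 1),
        ω ^ (m * (-e)) * (Complex.I * m))
      = -(starRingEnd ℂ) (((Real.pi / (N * L) : ℝ) : ℂ) *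
          ∑ m ∈ Finset.Icc (-((N : ℤ) / 2)) ((N : ℤ) / 2 - 1),
            ω ^ (m * e) * (Complex.I * m)) := by
    rw [map_mul, Complex.conj_ofReal, map_sum, ← mul_neg, ← Finset.sum_neg_distrib]
    congr 1
    refine Finset.sum_congr rfl fun m _ => ?_
    rw [map_mul, map_zpow₀, conj_omega, map_mul, Complex.conj_I, map_intCast,
      inv_zpow, ← zpow_neg, ← mul_neg m e, ← hω]
    ring
  rw [key, Complex.neg_re, Complex.conj_re]

lemma DN_odd (N : ℕ) (L : ℝ) (a b c d : Fin N)
    (h : (b : ℤ) - (a : ℤ) = -((d : ℤ) - (c : ℤ))) :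
    DNmat N L a b = - DNmat N L c d := by
  show (((Real.pi / (N * L) : ℝ) : ℂ) *
      ∑ m ∈ Finset.Icc (-((N : ℤ) / 2)) ((N : ℤ) / 2 - 1),
        Complex.exp (-2 * Real.pi * Complex.I / N) ^ (m * ((b : ℤ) - (a : ℤ)))
          * (Complex.I * m)).re = _
  rw [h]
  exact odd_sum N L ((d : ℤ) - (c : ℤ))

/-- For even `N` and `L > 0`, the flip matrix anticommutes with the pseudospectral
differentiation matrix: `D D_N = -D_N D`; in particular `D_N² D = D D_N²`. -/
theorem flip_anticommutes_DN (N : ℕ) (hN : 0 < N) (hNe : Even N) (L : ℝ) (hL : 0 < L) :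
    flipMat N * DNmat N L = -(DNmat N L * flipMat N) ∧
      (DNmat N L) ^ 2 * flipMat N = flipMat N * (DNmat N L) ^ 2 := by
  have hcondL : ∀ l k : Fin N, ((l : ℕ) + (k : ℕ) = N - 1) ↔ k = l.rev := by
    intro l k
    rw [Fin.ext_iff, Fin.val_rev]
    omega
  have hL' : ∀ (A : Matrix (Fin N) (Fin N) ℝ) (l j : Fin N),
      (flipMat N * A) l j = A l.rev j := by
    intro A l j
    simp [Matrix.mul_apply, flipMat, hcondL, ite_mul]
  have hR' : ∀ (A : Matrix (Fin N) (Fin N) ℝ) (l j : Fin N),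
      (A * flipMat N) l j = A l j.rev := by
    intro A l j
    have : ∀ k : Fin N, ((k : ℕ) + (j : ℕ) = N - 1) ↔ k = j.rev := by
      intro k
      rw [Fin.ext_iff, Fin.val_rev]
      omega
    simp [Matrix.mul_apply, flipMat, this, mul_ite]
  have h1 : flipMat N * DNmat N L = -(DNmat N L * flipMat N) := by
    ext l j
    rw [hL', Matrix.neg_apply, hR']
    apply DN_odd
    have h1 := l.isLt
    have h2 := j.isLt
    rw [Fin.val_rev, Fin.val_rev] at *
    push_cast
    omega
  refine ⟨h1, ?_⟩
  have h2 : DNmat N L * flipMat N = -(flipMat N * DNmat N L) := by rw [h1, neg_neg]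
  calc (DNmat N L) ^ 2 * flipMat N
      = DNmat N L * (DNmat N L * flipMat N) := by rw [sq, Matrix.mul_assoc]
    _ = DNmat N L * -(flipMat N * DNmat N L) := by rw [h2]
    _ = -(DNmat N L * (flipMat N * DNmat N L)) := by rw [Matrix.mul_neg]
    _ = -((DNmat N L * flipMat N) * DNmat N L) := by rw [Matrix.mul_assoc]
    _ = -(-(flipMat N * DNmat N L) * DNmat N L) := by rw [h2]
    _ = (flipMat N * DNmat N L) * DNmat N L := by rw [Matrix.neg_mul, neg_neg]
    _ = flipMat N * (DNmat N L) ^ 2 := by rw [Matrix.mul_assoc, sq]
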